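/- In any loop L, the Akivis identity holds on the associated graded group of the commutator-associator filtration: for a ∈ L_p, b ∈ L_q, c ∈ L_r, writing the induced operations additively on gr L = ⊕ L_i/L_{i+1}, one has [[a,b],c] + [[b,c],a] + [[c,a],b] = (a,b,c) + (b,c,a) + (c,a,b) - (a,c,b) - (c,b,a) - (b,a,c) in L_{p+q+r}/L_{p+q+r+1}. -/
import Mathlib


/-- A loop: a quasigroup with a two-sided identity. -/
class Loop (α : Type*) extends Mul α, One α where
  ldiv : α → α → α
  rdiv : α → α → α
  one_mul : ∀ a : α, 1 * a = a
  mul_one : ∀ a : α, a * 1 = a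
  mul_ldiv : ∀ a b : α, a * ldiv a b = b
  ldiv_mul : ∀ a b : α, ldiv a (a * b) = b
  rdiv_mul : ∀ a b : α, rdiv a b * b = a
  mul_rdiv : ∀ a b : α, rdiv (a * b) b = a

namespace Loop

variable {α : Type*} [Loop α]

/-- The commutator `[a,b] = (ba)\(ab)`. -/
def comm (a b : α) : α := ldiv (b * a) (a * b)

/-- The associator `(a,b,c) = (a(bc))\((ab)c)`. -/
def assoc (a b c : α) : α := ldiv (a * (b * c)) ((a * b) * c)

/-- The associator deviation indexed by a list of indices `αs = [α_n, ..., α_1]`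
(stored with the *last* index first) applied to a list of arguments.
Level `0` (empty index list) is the associator. -/
def dev : List ℕ → List α → α
  | [], [a, b, c] => assoc a b c
  | (k :: rest), args =>
      let A : α → α := fun x => dev rest (args.take (k - 1) ++ x :: args.drop (k + 1))
      ldiv (A (args.getD (k - 1) 1) * A (args.getD k 1))
        (A (args.getD (k - 1) 1 * args.getD k 1))
  | _, _ => 1

/-- A subset is a subloop if it contains `1` and is closed under
multiplication and both divisions. -/
def IsSubloop (S : Set α) : Prop :=
  (1 : α) ∈ S ∧ ∀ a ∈ S, ∀ b ∈ S, a * b ∈ S ∧ ldiv a b ∈ S ∧ rdiv a b ∈ S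

/-- A subloop is normal if `xN = Nx`, `(Nx)y = N(xy)` and `y(xN) = (yx)N`. -/
def IsNormal (S : Set α) : Prop :=
  IsSubloop S ∧
  (∀ x : α, {z | ∃ n ∈ S, z = x * n} = {z | ∃ n ∈ S, z = n * x}) ∧
  (∀ x y : α, {z | ∃ n ∈ S, z = (n * x) * y} = {z | ∃ n ∈ S, z = n * (x * y)}) ∧
  (∀ x y : α, {z | ∃ n ∈ S, z = y * (x * n)} = {z | ∃ n ∈ S, z = (y * x) * n})

/-- `N/M` is central in `L/M`: all commutators and associators involving an
element of `N` lie in `M`. -/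
def CentralMod (N M : Set α) : Prop :=
  ∀ n ∈ N, ∀ x y : α,
    comm n x ∈ M ∧ comm x n ∈ M ∧
    assoc n x y ∈ M ∧ assoc x n y ∈ M ∧ assoc x y n ∈ M

/-- `[N,L]`: the smallest normal subloop `M` such that `N/M` is central in `L/M`. -/
def bracket (N : Set α) : Set α := ⋂₀ {M | IsNormal M ∧ CentralMod N M}

end Loop

/-- The lower central series of a loop: `γ 1 = L`, `γ (i+1) = [γ i, L]`. -/
def Loop.gamma (α : Type*) [Loop α] : ℕ → Set α
  | 0 => Set.univ
  | 1 => Set.univ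
  | (n + 2) => Loop.bracket (Loop.gamma α (n + 1))

namespace Loop

variable {α : Type*} [Loop α]

/-- A family `M i` of normal subloops is admissible for the
commutator-associator filtration. -/
def Admissible (M : ℕ → Set α) : Prop :=
  (∀ i, IsNormal (M i)) ∧ M 1 = Set.univ ∧
  (∀ i p q, 1 ≤ p → 1 ≤ q → i ≤ p + q →
    ∀ a ∈ M p, ∀ b ∈ M q, comm a b ∈ M i) ∧
  (∀ i p q r, 1 ≤ p → 1 ≤ q → 1 ≤ r → i ≤ p + q + r →
    ∀ a ∈ M p, ∀ b ∈ M q, ∀ c ∈ M r, assoc a b c ∈ M i) ∧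
  (∀ (i : ℕ) (idx ps : List ℕ) (xs : List α), idx ≠ [] →
    ps.length = idx.length + 3 → xs.length = idx.length + 3 →
    (∀ j < idx.length, 1 ≤ idx.getD j 0 ∧ idx.getD j 0 ≤ (idx.length - j) + 2) →
    (∀ j < ps.length, 1 ≤ ps.getD j 0 ∧ xs.getD j 1 ∈ M (ps.getD j 0)) →
    i ≤ ps.sum → dev idx xs ∈ M i)

/-- The commutator-associator filtration: the smallest admissible family. -/
def casub (α : Type*) [Loop α] (i : ℕ) : Set α :=
  ⋂₀ {S | ∃ M : ℕ → Set α, Admissible M ∧ S = M i}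

/-- Congruence modulo a (normal) subloop: `x ≡ y mod N` iff `x ∈ yN`. -/
def ModEq (N : Set α) (x y : α) : Prop := ∃ n ∈ N, x = y * n

/-- Loop homomorphisms: maps preserving multiplication. -/
def IsLoopHom {β : Type*} [Loop β] (φ : α → β) : Prop :=
  ∀ a b : α, φ (a * b) = φ a * φ b

/-- The subloop generated by a subset. -/
def closure (S : Set α) : Set α := ⋂₀ {T | IsSubloop T ∧ S ⊆ T}

/-- Left-normed powers: `ypow y m = ((...(yy)y)...)y`. -/
def ypow (y : α) : ℕ → α
  | 0 => 1
  | (m + 1) => ypow y m * y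

end Loop

section Higman

variable {L B : Type*} [Loop L] [AddCommGroup B]

/-- Multiplication in Higman's loop `(L, B)`. -/
def hmul (f : L → L → B) (x y : L × B) : L × B :=
  (x.1 * y.1, x.2 + y.2 + f x.1 y.1)

/-- Left division in Higman's loop: `(l2,b2)\(l1,b1) = (l2\l1, b1-b2-f(l2, l2\l1))`. -/
def hldiv (f : L → L → B) (x y : L × B) : L × B :=
  (Loop.ldiv x.1 y.1, y.2 - x.2 - f x.1 (Loop.ldiv x.1 y.1))

/-- Right division in Higman's loop: `(l1,b1)/(l2,b2) = (l1/l2, b1-b2-f(l1/l2, l2))`. -/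
def hrdiv (f : L → L → B) (x y : L × B) : L × B :=
  (Loop.rdiv x.1 y.1, x.2 - y.2 - f (Loop.rdiv x.1 y.1) y.1)

/-- The commutator in Higman's loop. -/
def hcomm (f : L → L → B) (x y : L × B) : L × B :=
  hldiv f (hmul f y x) (hmul f x y)

/-- The associator in Higman's loop. -/
def hassoc (f : L → L → B) (x y z : L × B) : L × B :=
  hldiv f (hmul f x (hmul f y z)) (hmul f (hmul f x y) z)

end Higman

section AkvAux

namespace Akv

open Loop

variable {L : Type*} [Loop L]

theorem comm_spec (a b : L) : (b * a) * Loop.comm a b = a * b := Loop.mul_ldiv _ _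

theorem assoc_spec (x y z : L) :
    (x * (y * z)) * Loop.assoc x y z = (x * y) * z := Loop.mul_ldiv _ _

variable {S : Set L}

theorem meq_comm {x y : L} (h : Loop.comm x y ∈ S) : Loop.ModEq S (x * y) (y * x) :=
  ⟨_, h, (comm_spec x y).symm⟩

theorem meq_assoc {x y z : L} (h : Loop.assoc x y z ∈ S) :
    Loop.ModEq S ((x * y) * z) (x * (y * z)) :=
  ⟨_, h, (assoc_spec x y z).symm⟩

theorem meq_refl (hN : Loop.IsNormal S) (x : L) : Loop.ModEq S x x :=
  ⟨1, hN.1.1, (Loop.mul_one x).symm⟩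

/-- xN = Nx, forward -/
theorem nmove1 (hN : Loop.IsNormal S) (x : L) {m : L} (hm : m ∈ S) :
    ∃ k ∈ S, x * m = k * x := by
  have h1 : x * m ∈ {z | ∃ n ∈ S, z = x * n} := ⟨m, hm, rfl⟩
  rw [hN.2.1 x] at h1
  obtain ⟨k, hk, he⟩ := h1
  exact ⟨k, hk, he⟩

theorem nmove1' (hN : Loop.IsNormal S) (x : L) {m : L} (hm : m ∈ S) :
    ∃ k ∈ S, m * x = x * k := by
  have h1 : m * x ∈ {z | ∃ n ∈ S, z = n * x} := ⟨m, hm, rfl⟩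
  rw [← hN.2.1 x] at h1
  obtain ⟨k, hk, he⟩ := h1
  exact ⟨k, hk, he⟩

theorem nmove2 (hN : Loop.IsNormal S) (x y : L) {m : L} (hm : m ∈ S) :
    ∃ k ∈ S, (m * x) * y = k * (x * y) := by
  have h1 : (m * x) * y ∈ {z | ∃ n ∈ S, z = (n * x) * y} := ⟨m, hm, rfl⟩
  rw [hN.2.2.1 x y] at h1
  obtain ⟨k, hk, he⟩ := h1
  exact ⟨k, hk, he⟩

theorem nmove3 (hN : Loop.IsNormal S) (x y : L) {m : L} (hm : m ∈ S) :
    ∃ k ∈ S, y * (x * m) = (y * x) * k := by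
  have h1 : y * (x * m) ∈ {z | ∃ n ∈ S, z = y * (x * n)} := ⟨m, hm, rfl⟩
  rw [hN.2.2.2 x y] at h1
  obtain ⟨k, hk, he⟩ := h1
  exact ⟨k, hk, he⟩

theorem nmove3' (hN : Loop.IsNormal S) (x y : L) {m : L} (hm : m ∈ S) :
    ∃ k ∈ S, (y * x) * m = y * (x * k) := by
  have h1 : (y * x) * m ∈ {z | ∃ n ∈ S, z = (y * x) * n} := ⟨m, hm, rfl⟩
  rw [← hN.2.2.2 x y] at h1
  obtain ⟨k, hk, he⟩ := h1
  exact ⟨k, hk, he⟩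

theorem meq_symm (hN : Loop.IsNormal S) {x y : L} (h : Loop.ModEq S x y) :
    Loop.ModEq S y x := by
  obtain ⟨m, hm, he⟩ := h
  have hm' : Loop.ldiv m 1 ∈ S := (hN.1.2 m hm 1 hN.1.1).2.1
  have h0 : y ∈ {z | ∃ n ∈ S, z = y * (m * n)} :=
    ⟨Loop.ldiv m 1, hm', by rw [Loop.mul_ldiv, Loop.mul_one]⟩
  rw [hN.2.2.2 m y] at h0
  obtain ⟨k, hk, hk2⟩ := h0
  exact ⟨k, hk, by rw [he]; exact hk2⟩

theorem meq_trans (hN : Loop.IsNormal S) {x y z : L}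
    (h1 : Loop.ModEq S x y) (h2 : Loop.ModEq S y z) : Loop.ModEq S x z := by
  obtain ⟨m, hm, he⟩ := h1
  obtain ⟨k, hk, he2⟩ := h2
  obtain ⟨j, hj, hj2⟩ := nmove3' hN k z hm
  refine ⟨k * j, (hN.1.2 k hk j hj).1, ?_⟩
  rw [he, he2, hj2]

theorem meq_mul_left (hN : Loop.IsNormal S) (z : L) {x y : L} (h : Loop.ModEq S x y) :
    Loop.ModEq S (z * x) (z * y) := by
  obtain ⟨m, hm, he⟩ := h
  obtain ⟨k, hk, hk2⟩ := nmove3 hN y z hm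
  exact ⟨k, hk, by rw [he, hk2]⟩

theorem meq_mul_right (hN : Loop.IsNormal S) (z : L) {x y : L} (h : Loop.ModEq S x y) :
    Loop.ModEq S (x * z) (y * z) := by
  obtain ⟨m, hm, he⟩ := h
  obtain ⟨k1, hk1, e1⟩ := nmove1 hN y hm
  obtain ⟨k2, hk2, e2⟩ := nmove2 hN y z hk1
  obtain ⟨k3, hk3, e3⟩ := nmove1' hN (y * z) hk2
  exact ⟨k3, hk3, by rw [he, e1, e2, e3]⟩

theorem meq_cancel_left (hN : Loop.IsNormal S) (z : L) {x y : L}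
    (h : Loop.ModEq S (z * x) (z * y)) : Loop.ModEq S x y := by
  obtain ⟨m, hm, he⟩ := h
  obtain ⟨k, hk, hk2⟩ := nmove3' hN y z hm
  refine ⟨k, hk, ?_⟩
  have h2 : Loop.ldiv z (z * x) = Loop.ldiv z (z * (y * k)) := by rw [he, hk2]
  rwa [Loop.ldiv_mul, Loop.ldiv_mul] at h2

theorem meq_mul (hN : Loop.IsNormal S) {x x' y y' : L}
    (h1 : Loop.ModEq S x x') (h2 : Loop.ModEq S y y') :
    Loop.ModEq S (x * y) (x' * y') :=
  meq_trans hN (meq_mul_right hN y h1) (meq_mul_left hN x' h2)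

end Akv

namespace Akv

/-- An element central modulo `S`. -/
structure Cent {L : Type*} [Loop L] (S : Set L) (u : L) : Prop where
  hcl : ∀ x : L, Loop.comm u x ∈ S
  hcr : ∀ x : L, Loop.comm x u ∈ S
  ha1 : ∀ x y : L, Loop.assoc u x y ∈ S
  ha2 : ∀ x y : L, Loop.assoc x u y ∈ S
  ha3 : ∀ x y : L, Loop.assoc x y u ∈ S

/-- A pair whose commutator, and associators with anything in the first slot,
lie in `S`. -/
structure GP {L : Type*} [Loop L] (S : Set L) (u v : L) : Prop where
  hc : Loop.comm u v ∈ S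
  h1 : ∀ x : L, Loop.assoc x u v ∈ S
  h2 : ∀ x : L, Loop.assoc x v u ∈ S

variable {L : Type*} [Loop L] {S : Set L}

theorem cent_comm {u : L} (hu : Cent S u) (x : L) :
    Loop.ModEq S (x * u) (u * x) := meq_comm (hu.hcr x)

theorem cent_comm' {u : L} (hu : Cent S u) (x : L) :
    Loop.ModEq S (u * x) (x * u) := meq_comm (hu.hcl x)

theorem cent_assoc {u : L} (hu : Cent S u) (x y : L) :
    Loop.ModEq S ((x * y) * u) (x * (y * u)) := meq_assoc (hu.ha3 x y)

theorem cent_pull (hN : Loop.IsNormal S) {u : L} (hu : Cent S u) (x y : L) :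
    Loop.ModEq S ((x * u) * y) ((x * y) * u) :=
  meq_trans hN (meq_assoc (hu.ha2 x y))
    (meq_trans hN (meq_mul_left hN x (cent_comm' hu y))
      (meq_symm hN (meq_assoc (hu.ha3 x y))))

theorem gp_swap (hN : Loop.IsNormal S) {u v : L} (hg : GP S u v) (x : L) :
    Loop.ModEq S ((x * u) * v) ((x * v) * u) :=
  meq_trans hN (meq_assoc (hg.h1 x))
    (meq_trans hN (meq_mul_left hN x (meq_comm hg.hc))
      (meq_symm hN (meq_assoc (hg.h2 x))))

/-- `(xy)z · (x,z,y) ≡ ((xz)y · [y,z]) · (x,y,z)`. -/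
theorem Blem (hN : Loop.IsNormal S) (x y z : L)
    (h1 : Loop.assoc x (z * y) (Loop.comm y z) ∈ S)
    (hA1 : Cent S (Loop.assoc x z y)) (hA2 : Cent S (Loop.assoc x y z)) :
    Loop.ModEq S (((x * y) * z) * Loop.assoc x z y)
      ((((x * z) * y) * Loop.comm y z) * Loop.assoc x y z) := by
  have e1 : (x * y) * z = (x * ((z * y) * Loop.comm y z)) * Loop.assoc x y z := by
    rw [comm_spec y z, assoc_spec]
  have s3 : Loop.ModEq S (x * ((z * y) * Loop.comm y z))
      ((x * (z * y)) * Loop.comm y z) := meq_symm hN (meq_assoc h1)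
  have s4 : Loop.ModEq S ((x * y) * z)
      (((x * (z * y)) * Loop.comm y z) * Loop.assoc x y z) := by
    rw [e1]; exact meq_mul_right hN _ s3
  have e5 : ((x * z) * y) * Loop.comm y z
      = ((x * (z * y)) * Loop.assoc x z y) * Loop.comm y z := by rw [assoc_spec]
  have s6 : Loop.ModEq S (((x * (z * y)) * Loop.assoc x z y) * Loop.comm y z)
      (((x * (z * y)) * Loop.comm y z) * Loop.assoc x z y) :=
    cent_pull hN hA1 _ _
  have t1 := meq_mul_right hN (Loop.assoc x z y) s4
  have t2 := cent_pull hN hA2 ((x * (z * y)) * Loop.comm y z) (Loop.assoc x z y)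
  have t3 : Loop.ModEq S (((x * (z * y)) * Loop.comm y z) * Loop.assoc x z y)
      (((x * z) * y) * Loop.comm y z) := by
    rw [e5]; exact meq_symm hN s6
  exact meq_trans hN t1 (meq_trans hN t2 (meq_mul_right hN _ t3))

/-- `(xy)z ≡ ((yx)z · [x,y]) · [[x,y],z]`. -/
theorem Clem (hN : Loop.IsNormal S) (x y z : L)
    (h1 : Loop.assoc (y * x) (Loop.comm x y) z ∈ S)
    (h2 : Loop.assoc (y * x) z (Loop.comm x y) ∈ S)
    (hZ : Cent S (Loop.comm (Loop.comm x y) z)) :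
    Loop.ModEq S ((x * y) * z)
      ((((y * x) * z) * Loop.comm x y) * Loop.comm (Loop.comm x y) z) := by
  have e1 : (x * y) * z = ((y * x) * Loop.comm x y) * z := by rw [comm_spec x y]
  have s2 : Loop.ModEq S (((y * x) * Loop.comm x y) * z)
      ((y * x) * (Loop.comm x y * z)) := meq_assoc h1
  have e3 : Loop.comm x y * z
      = (z * Loop.comm x y) * Loop.comm (Loop.comm x y) z := (comm_spec _ z).symm
  have s4 : Loop.ModEq S ((y * x) * ((z * Loop.comm x y) * Loop.comm (Loop.comm x y) z))
      (((y * x) * (z * Loop.comm x y)) * Loop.comm (Loop.comm x y) z) :=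
    meq_symm hN (cent_assoc hZ (y * x) (z * Loop.comm x y))
  have s5 : Loop.ModEq S ((y * x) * (z * Loop.comm x y))
      (((y * x) * z) * Loop.comm x y) := meq_symm hN (meq_assoc h2)
  rw [e1]
  refine meq_trans hN s2 ?_
  rw [e3]
  exact meq_trans hN s4 (meq_mul_right hN _ s5)

theorem akivis_core {L : Type*} [Loop L] (M : ℕ → Set L) (hM : Loop.Admissible M)
    (p q r : ℕ) (hp : 1 ≤ p) (hq : 1 ≤ q) (hr : 1 ≤ r)
    (a b c : L) (ha : a ∈ M p) (hb : b ∈ M q) (hc : c ∈ M r) :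
    Loop.ModEq (M (p + q + r + 1))
      ((Loop.comm (Loop.comm a b) c * Loop.comm (Loop.comm b c) a *
          Loop.comm (Loop.comm c a) b) *
        (Loop.assoc a c b * Loop.assoc c b a * Loop.assoc b a c))
      (Loop.assoc a b c * Loop.assoc b c a * Loop.assoc c a b) := by
  have hN : Loop.IsNormal (M (p + q + r + 1)) := hM.1 _
  have mem1 : ∀ x : L, x ∈ M 1 := fun x => by rw [hM.2.1]; trivial
  have commW : ∀ {i s t : ℕ} {u v : L}, 1 ≤ s → 1 ≤ t → i ≤ s + t →
      u ∈ M s → v ∈ M t → Loop.comm u v ∈ M i :=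
    fun hs ht hi hu hv => hM.2.2.1 _ _ _ hs ht hi _ hu _ hv
  have assocW : ∀ {i s t w : ℕ} {u v x : L}, 1 ≤ s → 1 ≤ t → 1 ≤ w →
      i ≤ s + t + w → u ∈ M s → v ∈ M t → x ∈ M w → Loop.assoc u v x ∈ M i :=
    fun hs ht hw hi hu hv hx => hM.2.2.2.1 _ _ _ _ hs ht hw hi _ hu _ hv _ hx
  have centW : ∀ {s : ℕ} {u : L}, 1 ≤ s → p + q + r ≤ s → u ∈ M s →
      Cent (M (p + q + r + 1)) u := by
    intro s u hs hns hu
    exact ⟨fun x => commW hs (le_refl 1) (by omega) hu (mem1 x),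
           fun x => commW (le_refl 1) hs (by omega) (mem1 x) hu,
           fun x y => assocW hs (le_refl 1) (le_refl 1) (by omega) hu (mem1 x) (mem1 y),
           fun x y => assocW (le_refl 1) hs (le_refl 1) (by omega) (mem1 x) hu (mem1 y),
           fun x y => assocW (le_refl 1) (le_refl 1) hs (by omega) (mem1 x) (mem1 y) hu⟩
  have gpW : ∀ {s t : ℕ} {u v : L}, 1 ≤ s → 1 ≤ t → p + q + r + 1 ≤ s + t →
      u ∈ M s → v ∈ M t → GP (M (p + q + r + 1)) u v := by
    intro s t u v hs ht hst hu hv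
    exact ⟨commW hs ht hst hu hv,
           fun x => assocW (le_refl 1) hs ht (by omega) (mem1 x) hu hv,
           fun x => assocW (le_refl 1) ht hs (by omega) (mem1 x) hv hu⟩
  -- memberships of the three commutators
  have hK1 : Loop.comm a b ∈ M (p + q) := commW hp hq le_rfl ha hb
  have hK2 : Loop.comm b c ∈ M (q + r) := commW hq hr le_rfl hb hc
  have hK3 : Loop.comm c a ∈ M (r + p) := commW hr hp le_rfl hc ha
  -- centrality of the weight-(p+q+r) elements
  have cZ1 : Cent (M (p + q + r + 1)) (Loop.comm (Loop.comm a b) c) :=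
    centW (s := p + q + r) (by omega) (by omega) (commW (by omega) hr le_rfl hK1 hc)
  have cZ2 : Cent (M (p + q + r + 1)) (Loop.comm (Loop.comm b c) a) :=
    centW (s := q + r + p) (by omega) (by omega) (commW (by omega) hp le_rfl hK2 ha)
  have cZ3 : Cent (M (p + q + r + 1)) (Loop.comm (Loop.comm c a) b) :=
    centW (s := r + p + q) (by omega) (by omega) (commW (by omega) hq le_rfl hK3 hb)
  have cAabc : Cent (M (p + q + r + 1)) (Loop.assoc a b c) :=
    centW (s := p + q + r) (by omega) (by omega) (assocW hp hq hr le_rfl ha hb hc)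
  have cAbca : Cent (M (p + q + r + 1)) (Loop.assoc b c a) :=
    centW (s := q + r + p) (by omega) (by omega) (assocW hq hr hp le_rfl hb hc ha)
  have cAcab : Cent (M (p + q + r + 1)) (Loop.assoc c a b) :=
    centW (s := r + p + q) (by omega) (by omega) (assocW hr hp hq le_rfl hc ha hb)
  have cAacb : Cent (M (p + q + r + 1)) (Loop.assoc a c b) :=
    centW (s := p + r + q) (by omega) (by omega) (assocW hp hr hq le_rfl ha hc hb)
  have cAcba : Cent (M (p + q + r + 1)) (Loop.assoc c b a) :=
    centW (s := r + q + p) (by omega) (by omega) (assocW hr hq hp le_rfl hc hb ha)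
  have cAbac : Cent (M (p + q + r + 1)) (Loop.assoc b a c) :=
    centW (s := q + p + r) (by omega) (by omega) (assocW hq hp hr le_rfl hb ha hc)
  -- good pairs among the commutators
  have gp23 : GP (M (p + q + r + 1)) (Loop.comm b c) (Loop.comm c a) :=
    gpW (by omega) (by omega) (by omega) hK2 hK3
  have gp13 : GP (M (p + q + r + 1)) (Loop.comm a b) (Loop.comm c a) :=
    gpW (by omega) (by omega) (by omega) hK1 hK3
  have gp21 : GP (M (p + q + r + 1)) (Loop.comm b c) (Loop.comm a b) :=
    gpW (by omega) (by omega) (by omega) hK2 hK1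
  -- the B and C relations
  have B1 := Blem hN a b c
    (assocW hp (le_refl 1) (by omega : 1 ≤ q + r) (by omega) ha (mem1 _) hK2) cAacb cAabc
  have B2 := Blem hN b c a
    (assocW hq (le_refl 1) (by omega : 1 ≤ r + p) (by omega) hb (mem1 _) hK3) cAbac cAbca
  have B3 := Blem hN c a b
    (assocW hr (le_refl 1) (by omega : 1 ≤ p + q) (by omega) hc (mem1 _) hK1) cAcba cAcab
  have C1 := Clem hN a b c
    (assocW (le_refl 1) (by omega : 1 ≤ p + q) hr (by omega) (mem1 _) hK1 hc)
    (assocW (le_refl 1) hr (by omega : 1 ≤ p + q) (by omega) (mem1 _) hc hK1) cZ1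
  have C2 := Clem hN b c a
    (assocW (le_refl 1) (by omega : 1 ≤ q + r) hp (by omega) (mem1 _) hK2 ha)
    (assocW (le_refl 1) hp (by omega : 1 ≤ q + r) (by omega) (mem1 _) ha hK2) cZ2
  have C3 := Clem hN c a b
    (assocW (le_refl 1) (by omega : 1 ≤ r + p) hq (by omega) (mem1 _) hK3 hb)
    (assocW (le_refl 1) hq (by omega : 1 ≤ r + p) (by omega) (mem1 _) hb hK3) cZ3
  have tr := @meq_trans L _ (M (p + q + r + 1)) hN
  have sy := @meq_symm L _ (M (p + q + r + 1)) hN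
  have mr := @meq_mul_right L _ (M (p + q + r + 1)) hN
  -- Path 1
  have f11 := mr (Loop.comm c a) B1
  have f12 := cent_pull hN cAabc (a * c * b * (Loop.comm b c)) (Loop.comm c a)
  have f13 := gp_swap hN gp23 (a * c * b)
  have f14 := tr f11 (tr f12 (mr (Loop.assoc a b c) f13))
  have f15 := mr (Loop.comm (Loop.comm c a) b) f14
  have f16 := cent_pull hN cAabc (a * c * b * (Loop.comm c a) * (Loop.comm b c)) (Loop.comm (Loop.comm c a) b)
  have f17 := sy (cent_pull hN cZ3 (a * c * b * (Loop.comm c a)) (Loop.comm b c))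
  have f18 := tr f15 (tr f16 (mr (Loop.assoc a b c) f17))
  have f19 := mr (Loop.assoc a b c) (mr (Loop.comm b c) (sy C3))
  have f20 := tr f18 f19
  have f21 := mr (Loop.assoc c b a) f20
  have f22 := cent_pull hN cAabc (c * a * b * (Loop.comm b c)) (Loop.assoc c b a)
  have f23 := sy (cent_pull hN cAcba (c * a * b) (Loop.comm b c))
  have f24 := tr f21 (tr f22 (mr (Loop.assoc a b c) f23))
  have f25 := tr f24 (mr (Loop.assoc a b c) (mr (Loop.comm b c) B3))
  have f26 := cent_pull hN cAcab (c * b * a * (Loop.comm a b)) (Loop.comm b c)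
  have F1 := tr f25 (mr (Loop.assoc a b c) f26)
  -- Path 2
  have g11 := mr (Loop.comm c a) C1
  have g12 := cent_pull hN cZ1 (b * a * c * (Loop.comm a b)) (Loop.comm c a)
  have g13 := gp_swap hN gp13 (b * a * c)
  have g14 := tr g11 (tr g12 (mr (Loop.comm (Loop.comm a b) c) g13))
  have g15 := mr (Loop.assoc b c a) g14
  have g16 := cent_pull hN cZ1 (b * a * c * (Loop.comm c a) * (Loop.comm a b)) (Loop.assoc b c a)
  have g17 := sy (cent_pull hN cAbca (b * a * c * (Loop.comm c a)) (Loop.comm a b))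
  have g18 := tr g15 (tr g16 (mr (Loop.comm (Loop.comm a b) c) g17))
  have g19 := tr g18 (mr (Loop.comm (Loop.comm a b) c) (mr (Loop.comm a b) (sy B2)))
  have g20 := tr g19 (mr (Loop.comm (Loop.comm a b) c) (mr (Loop.comm a b) (mr (Loop.assoc b a c) C2)))
  have g21 := cent_pull hN cAbac (c * b * a * (Loop.comm b c) * (Loop.comm (Loop.comm b c) a)) (Loop.comm a b)
  have g22 := cent_pull hN cZ2 (c * b * a * (Loop.comm b c)) (Loop.comm a b)
  have g23 := gp_swap hN gp21 (c * b * a)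
  have F2 := tr g20 (tr (mr (Loop.comm (Loop.comm a b) c) g21)
    (tr (mr (Loop.comm (Loop.comm a b) c) (mr (Loop.assoc b a c) g22)) (mr (Loop.comm (Loop.comm a b) c) (mr (Loop.assoc b a c) (mr (Loop.comm (Loop.comm b c) a) g23)))))
  -- combine the two paths
  have G1 := mr (Loop.assoc b c a) F1
  have G2 := mr (Loop.assoc c b a) (mr (Loop.comm (Loop.comm c a) b) (mr (Loop.assoc a c b) F2))
  have m1 := cent_pull hN cAacb (a * b * c) (Loop.comm c a)
  have h1 := mr (Loop.assoc b c a) (mr (Loop.assoc c b a) (mr (Loop.comm (Loop.comm c a) b) m1))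
  have m2 := cent_pull hN cAcba (a * b * c * (Loop.comm c a) * (Loop.assoc a c b) * (Loop.comm (Loop.comm c a) b)) (Loop.assoc b c a)
  have m3 := cent_pull hN cZ3 (a * b * c * (Loop.comm c a) * (Loop.assoc a c b)) (Loop.assoc b c a)
  have m4 := cent_pull hN cAacb (a * b * c * (Loop.comm c a)) (Loop.assoc b c a)
  have hX := tr h1 (tr m2 (tr (mr (Loop.assoc c b a) m3) (mr (Loop.assoc c b a) (mr (Loop.comm (Loop.comm c a) b) m4))))
  have Hbig := tr (sy G2) (tr (sy hX) G1)
  -- factor out the common prefix W = ((cb)a·K1)·K2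
  have s1 := cent_assoc cAbac (c * b * a * (Loop.comm a b) * (Loop.comm b c)) (Loop.comm (Loop.comm b c) a)
  have s2 := cent_assoc cZ1 (c * b * a * (Loop.comm a b) * (Loop.comm b c)) ((Loop.comm (Loop.comm b c) a) * (Loop.assoc b a c))
  have s3 := cent_assoc cAacb (c * b * a * (Loop.comm a b) * (Loop.comm b c)) ((Loop.comm (Loop.comm b c) a) * (Loop.assoc b a c) * (Loop.comm (Loop.comm a b) c))
  have s4 := cent_assoc cZ3 (c * b * a * (Loop.comm a b) * (Loop.comm b c)) ((Loop.comm (Loop.comm b c) a) * (Loop.assoc b a c) * (Loop.comm (Loop.comm a b) c) * (Loop.assoc a c b))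
  have s5 := cent_assoc cAcba (c * b * a * (Loop.comm a b) * (Loop.comm b c))
    ((Loop.comm (Loop.comm b c) a) * (Loop.assoc b a c) * (Loop.comm (Loop.comm a b) c) * (Loop.assoc a c b) * (Loop.comm (Loop.comm c a) b))
  have foldL := tr (mr (Loop.assoc c b a) (mr (Loop.comm (Loop.comm c a) b) (mr (Loop.assoc a c b) (mr (Loop.comm (Loop.comm a b) c) s1))))
    (tr (mr (Loop.assoc c b a) (mr (Loop.comm (Loop.comm c a) b) (mr (Loop.assoc a c b) s2)))
      (tr (mr (Loop.assoc c b a) (mr (Loop.comm (Loop.comm c a) b) s3)) (tr (mr (Loop.assoc c b a) s4) s5)))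
  have t1 := cent_assoc cAabc (c * b * a * (Loop.comm a b) * (Loop.comm b c)) (Loop.assoc c a b)
  have t2 := cent_assoc cAbca (c * b * a * (Loop.comm a b) * (Loop.comm b c)) ((Loop.assoc c a b) * (Loop.assoc a b c))
  have foldR := tr (mr (Loop.assoc b c a) t1) t2
  have cancel := meq_cancel_left hN (c * b * a * (Loop.comm a b) * (Loop.comm b c))
    (tr (sy foldL) (tr Hbig foldR))
  -- match with the two sides of the goal
  have hGR := tr (cent_comm cAcab ((Loop.assoc a b c) * (Loop.assoc b c a))) (sy (cent_assoc cAbca (Loop.assoc c a b) (Loop.assoc a b c)))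
  have fl1 := cent_assoc cAbac ((Loop.comm (Loop.comm a b) c) * (Loop.comm (Loop.comm b c) a) * (Loop.comm (Loop.comm c a) b)) ((Loop.assoc a c b) * (Loop.assoc c b a))
  have fl2 := cent_assoc cAcba ((Loop.comm (Loop.comm a b) c) * (Loop.comm (Loop.comm b c) a) * (Loop.comm (Loop.comm c a) b)) (Loop.assoc a c b)
  have hGL := tr (sy fl1) (mr (Loop.assoc b a c) (sy fl2))
  have p1 := cent_comm cZ2 (Loop.comm (Loop.comm a b) c)
  have lift1 := mr (Loop.assoc b a c) (mr (Loop.assoc c b a) (mr (Loop.assoc a c b) (mr (Loop.comm (Loop.comm c a) b) p1)))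
  have p2 := cent_pull hN cAcba ((Loop.comm (Loop.comm b c) a) * (Loop.comm (Loop.comm a b) c) * (Loop.comm (Loop.comm c a) b) * (Loop.assoc a c b)) (Loop.assoc b a c)
  have p3 := cent_pull hN cAacb ((Loop.comm (Loop.comm b c) a) * (Loop.comm (Loop.comm a b) c) * (Loop.comm (Loop.comm c a) b)) (Loop.assoc b a c)
  have p4 := cent_pull hN cZ3 ((Loop.comm (Loop.comm b c) a) * (Loop.comm (Loop.comm a b) c)) (Loop.assoc b a c)
  have p5 := cent_pull hN cZ1 (Loop.comm (Loop.comm b c) a) (Loop.assoc b a c)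
  have p6 := cent_pull hN cZ3 ((Loop.comm (Loop.comm b c) a) * (Loop.assoc b a c) * (Loop.comm (Loop.comm a b) c)) (Loop.assoc a c b)
  have hperm := tr lift1 (tr p2 (tr (mr (Loop.assoc c b a) p3)
    (tr (mr (Loop.assoc c b a) (mr (Loop.assoc a c b) p4)) (tr (mr (Loop.assoc c b a) (mr (Loop.assoc a c b) (mr (Loop.comm (Loop.comm c a) b) p5)))
      (mr (Loop.assoc c b a) p6)))))
  exact tr hGL (tr hperm (tr cancel (sy hGR)))

end Akv

end AkvAux


/-- the Akivis identity on the associated graded group: for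
`a ∈ L_p`, `b ∈ L_q`, `c ∈ L_r`, writing the induced operations additively in
`L_{p+q+r}/L_{p+q+r+1}` amounts to the congruence
`[[a,b],c]·[[b,c],a]·[[c,a],b] · ((a,c,b)·(c,b,a)·(b,a,c))
  ≡ (a,b,c)·(b,c,a)·(c,a,b)  mod L_{p+q+r+1}`. -/
theorem akivis_identity {L : Type*} [Loop L] (p q r : ℕ)
    (hp : 1 ≤ p) (hq : 1 ≤ q) (hr : 1 ≤ r)
    (a b c : L) (ha : a ∈ Loop.casub L p) (hb : b ∈ Loop.casub L q)
    (hc : c ∈ Loop.casub L r) :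
    Loop.ModEq (Loop.casub L (p + q + r + 1))
      ((Loop.comm (Loop.comm a b) c * Loop.comm (Loop.comm b c) a *
          Loop.comm (Loop.comm c a) b) *
        (Loop.assoc a c b * Loop.assoc c b a * Loop.assoc b a c))
      (Loop.assoc a b c * Loop.assoc b c a * Loop.assoc c a b) := by
  refine ⟨Loop.ldiv (Loop.assoc a b c * Loop.assoc b c a * Loop.assoc c a b)
      ((Loop.comm (Loop.comm a b) c * Loop.comm (Loop.comm b c) a *
          Loop.comm (Loop.comm c a) b) *
        (Loop.assoc a c b * Loop.assoc c b a * Loop.assoc b a c)), ?_,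
    (Loop.mul_ldiv _ _).symm⟩
  intro T hT
  obtain ⟨M, hM, rfl⟩ := hT
  have ha' : a ∈ M p := ha (M p) ⟨M, hM, rfl⟩
  have hb' : b ∈ M q := hb (M q) ⟨M, hM, rfl⟩
  have hc' : c ∈ M r := hc (M r) ⟨M, hM, rfl⟩
  obtain ⟨m, hm, he⟩ := Akv.akivis_core M hM p q r hp hq hr a b c ha' hb' hc'
  rw [he, Loop.ldiv_mul]
  exact hm
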